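/- Let m be a positive integer, n = 3m, q = 2^n, and let a ∈ F_q. Let δ ∈ F_q satisfy Tr_m^{3m}(δ) ≠ 1, and let c ∈ F_q be an element not in the subfield F_{2^m} (i.e., c^{2^m} ≠ c). Then the number of x ∈ F_q satisfying both Tr_m^{3m}((1+c)x) = 0 and ((1+c)x)^{2^{3m−1}} + (1+c)(1 + Tr_m^{3m}(δ))x + (a^{2^{2m}} + a^{2^m})·Tr_m^{3m}(x) = 0 is at most 4. -/

import Mathlib

open Polynomial in
theorem aux_count_4 (F : Type*) [Field F] [Fintype F] (e4 e2 e1 : F) (he1 : e1 ≠ 0) (S : Set F)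
    (h : ∀ x ∈ S, e4*x^4 + e2*x^2 + e1*x = 0) : S.ncard ≤ 4 := by
  classical
  set P : F[X] := C e4 * X^4 + C e2 * X^2 + C e1 * X with hPdef
  have hc1 : P.coeff 1 = e1 := by
    simp [hPdef, coeff_X, coeff_X_pow]
  have hP0 : P ≠ 0 := fun h0 => he1 (by rw [← hc1, h0, coeff_zero])
  have hdeg : P.natDegree ≤ 4 := by
    apply le_trans (natDegree_add_le _ _)
    simp only [max_le_iff]
    refine ⟨le_trans (natDegree_add_le _ _) ?_, ?_⟩
    · simp only [max_le_iff]
      exact ⟨le_trans (natDegree_C_mul_le _ _) (by simp),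
        le_trans (natDegree_C_mul_le _ _) (by simp)⟩
    · exact le_trans (natDegree_C_mul_le _ _) (by simp [natDegree_X_le])
  have hsub : S ⊆ (P.roots.toFinset : Set F) := by
    intro x hx
    simp only [Finset.coe_sort_coe, Multiset.mem_toFinset, Finset.mem_coe, mem_roots hP0,
      IsRoot.def]
    simp [hPdef]
    linear_combination h x hx
  calc S.ncard ≤ (P.roots.toFinset : Set F).ncard := Set.ncard_le_ncard hsub (Set.toFinite _)
    _ = P.roots.toFinset.card := Set.ncard_coe_finset _
    _ ≤ Multiset.card P.roots := Multiset.toFinset_card_le _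
    _ ≤ P.natDegree := P.card_roots'
    _ ≤ 4 := hdeg

set_option maxHeartbeats 2000000 in
theorem aux_key_4 (F : Type*) [Field F] (h2 : (2:F) = 0) (d d1 d2 s b0 b1 x0 x1 x2 : F)
    (hQ0 : d*x0 = (d*s*x0 + b0*(x0+x1+x2))^2)
    (hQ1 : d1*x1 = (d1*s*x1 + b1*(x0+x1+x2))^2)
    (hL : d*x0 + d1*x1 + d2*x2 = 0) :
    (d1^4*d2^4*s^4*b0^8 + d^4*d2^4*s^4*b0^4*b1^4 + d^4*d1^4*s^4*b0^4*b1^4 + d^4*d1^4*s^4*b0^8 + d^4*d1^4*d2^4*s^8*b0^4)*x0^4 + (d1^2*d2^4*b0^8 + d1^4*d2^2*b0^8 + d^2*d2^4*b0^4*b1^4 + d^2*d1^2*d2^2*b0^8 + d^2*d1^2*d2^4*s^2*b0^6 + d^2*d1^4*b0^4*b1^4 + d^2*d1^4*b0^8 + d^2*d1^4*d2^2*s^2*b0^6 + d^2*d1^4*d2^4*s^4*b0^4)*x0^2 + (d*d1^2*d2^4*b0^6 + d*d1^4*d2^2*b0^6)*x0 = 0 := by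
  linear_combination (d1*d2^4*b0^6*b1^2*x1 + 4*d1^2*d2^3*b0^6*b1^2*x1 - d1^2*d2^4*b0^6 + d1^2*d2^4*s^2*b0^6*b1^2*x1^2 + 6*d1^3*d2^2*b0^6*b1^2*x1 - 2*d1^3*d2^3*b0^6 + 4*d1^3*d2^3*s^2*b0^6*b1^2*x1^2 + 4*d1^4*d2*b0^6*b1^2*x1 - d1^4*d2^2*b0^6 + 6*d1^4*d2^2*s^2*b0^6*b1^2*x1^2 + d1^4*d2^4*s^4*b0^6*x1^2 - d1^4*d2^4*s^4*b0^6*x0^2 + d1^5*b0^6*b1^2*x1 + 4*d1^5*d2*s^2*b0^6*b1^2*x1^2 + 2*d1^5*d2^3*s^4*b0^6*x1^2 + d1^6*s^2*b0^6*b1^2*x1^2 + d1^6*d2^2*s^4*b0^6*x1^2 + d*d2^4*b0^4*b1^4*x0 + 4*d*d1*d2^3*b0^4*b1^4*x0 + 6*d*d1^2*d2^2*b0^4*b1^4*x0 + 4*d*d1^3*d2*b0^4*b1^4*x0 + d*d1^4*b0^4*b1^4*x0 - 2*d*d1^4*d2^3*s^4*b0^6*x0^2 + d*d1^4*d2^4*s^4*b0^4*x0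 - d^2*d2^4*s^2*b0^4*b1^4*x0^2 - 4*d^2*d1*d2^3*s^2*b0^4*b1^4*x0^2 - 6*d^2*d1^2*d2^2*s^2*b0^4*b1^4*x0^2 - 4*d^2*d1^3*d2*s^2*b0^4*b1^4*x0^2 - d^2*d1^4*s^2*b0^4*b1^4*x0^2 - d^2*d1^4*d2^2*s^4*b0^6*x0^2 - d^2*d1^4*d2^4*s^6*b0^4*x0^2) * hQ0 + (-d1*d2^4*b0^8*x1 - 4*d1^2*d2^3*b0^8*x1 - d1^2*d2^4*s^2*b0^8*x1^2 - 6*d1^3*d2^2*b0^8*x1 - 4*d1^3*d2^3*s^2*b0^8*x1^2 - 4*d1^4*d2*b0^8*x1 - 6*d1^4*d2^2*s^2*b0^8*x1^2 - d1^5*b0^8*x1 - 4*d1^5*d2*s^2*b0^8*x1^2 - d1^6*s^2*b0^8*x1^2 - d*d2^4*b0^6*b1^2*x0 - 4*d*d1*d2^3*b0^6*b1^2*x0 - 6*d*d1^2*d2^2*b0^6*b1^2*x0 - 4*d*d1^3*d2*b0^6*b1^2*x0 - d*d1^4*b0^6*b1^2*x0 + d^2*d2^4*s^2*b0^6*b1^2*x0^2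 + 4*d^2*d1*d2^3*s^2*b0^6*b1^2*x0^2 + 6*d^2*d1^2*d2^2*s^2*b0^6*b1^2*x0^2 + 4*d^2*d1^3*d2*s^2*b0^6*b1^2*x0^2 + d^2*d1^4*s^2*b0^6*b1^2*x0^2) * hQ1 + (d1^2*d2^3*b0^8*x2 + 2*d1^2*d2^3*b0^8*x1 + 2*d1^2*d2^3*b0^8*x0 + 2*d1^3*d2^2*b0^8*x2 + 5*d1^3*d2^2*b0^8*x1 + 4*d1^3*d2^2*b0^8*x0 + d1^4*d2*b0^8*x2 + 4*d1^4*d2*b0^8*x1 + 2*d1^4*d2*b0^8*x0 - d1^4*d2^3*s^4*b0^8*x1^2*x2 - 2*d1^4*d2^3*s^4*b0^8*x1^3 - 2*d1^4*d2^3*s^4*b0^8*x0*x1^2 + d1^4*d2^3*s^4*b0^8*x0^2*x2 + 2*d1^4*d2^3*s^4*b0^8*x0^2*x1 + 2*d1^4*d2^3*s^4*b0^8*x0^3 + d1^5*b0^8*x1 - 2*d1^5*d2^2*s^4*b0^8*x1^2*x2 - 5*d1^5*d2^2*s^4*b0^8*x1^3 - 4*d1^5*d2^2*s^4*b0^8*x0*x1^2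 + d1^5*d2^2*s^4*b0^8*x0^2*x1 - d1^6*d2*s^4*b0^8*x1^2*x2 - 4*d1^6*d2*s^4*b0^8*x1^3 - 2*d1^6*d2*s^4*b0^8*x0*x1^2 - d1^7*s^4*b0^8*x1^3 + d*d1^2*d2^2*b0^8*x0 + 2*d*d1^3*d2*b0^8*x0 + d*d1^4*b0^8*x0 - d*d1^4*d2^2*s^4*b0^8*x0*x1^2 + 2*d*d1^4*d2^2*s^4*b0^8*x0^2*x2 + 4*d*d1^4*d2^2*s^4*b0^8*x0^2*x1 + 5*d*d1^4*d2^2*s^4*b0^8*x0^3 - d*d1^4*d2^3*s^4*b0^6*x0*x2 - 2*d*d1^4*d2^3*s^4*b0^6*x0*x1 - 2*d*d1^4*d2^3*s^4*b0^6*x0^2 - 2*d*d1^5*d2*s^4*b0^8*x0*x1^2 + 2*d*d1^5*d2*s^4*b0^8*x0^2*x1 - d*d1^5*d2^2*s^4*b0^6*x0*x1 - d*d1^6*s^4*b0^8*x0*x1^2 + d^2*d1^4*d2*s^4*b0^8*x0^2*x2 + 2*d^2*d1^4*d2*s^4*b0^8*x0^2*x1 + 4*d^2*d1^4*d2*s^4*b0^8*x0^3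 - d^2*d1^4*d2^2*s^4*b0^6*x0^2 + d^2*d1^4*d2^3*s^6*b0^6*x0^2*x2 + 2*d^2*d1^4*d2^3*s^6*b0^6*x0^2*x1 + 2*d^2*d1^4*d2^3*s^6*b0^6*x0^3 + d^2*d1^5*s^4*b0^8*x0^2*x1 + d^2*d1^5*d2^2*s^6*b0^6*x0^2*x1 + d^3*d1^4*s^4*b0^8*x0^3 + d^3*d1^4*d2^2*s^6*b0^6*x0^3) * hL + (-d1^2*d2^4*b0^8*x2^2 - 2*d1^2*d2^4*b0^8*x1*x2 - 2*d1^2*d2^4*b0^8*x0*x2 - d1^2*d2^4*b0^8*x0*x1 - d1^2*d2^4*s*b0^8*b1*x1^2*x2 - d1^2*d2^4*s*b0^8*b1*x1^3 - d1^2*d2^4*s*b0^8*b1*x0*x1^2 - 2*d1^3*d2^3*b0^8*x2^2 - 5*d1^3*d2^3*b0^8*x1*x2 - 4*d1^3*d2^3*b0^8*x0*x2 - 3*d1^3*d2^3*b0^8*x0*x1 - d1^3*d2^3*b0^8*x0^2 - 4*d1^3*d2^3*s*b0^8*b1*x1^2*x2 - 4*d1^3*d2^3*s*b0^8*b1*x1^3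 - 4*d1^3*d2^3*s*b0^8*b1*x0*x1^2 - d1^3*d2^4*s^3*b0^8*b1*x1^3*x2 - d1^3*d2^4*s^3*b0^8*b1*x1^4 - d1^3*d2^4*s^3*b0^8*b1*x0*x1^3 - d1^4*d2^2*b0^8*x2^2 - 4*d1^4*d2^2*b0^8*x1*x2 - 2*d1^4*d2^2*b0^8*x0*x2 - 3*d1^4*d2^2*b0^8*x0*x1 - 6*d1^4*d2^2*s*b0^8*b1*x1^2*x2 - 6*d1^4*d2^2*s*b0^8*b1*x1^3 - 6*d1^4*d2^2*s*b0^8*b1*x0*x1^2 - 4*d1^4*d2^3*s^3*b0^8*b1*x1^3*x2 - 4*d1^4*d2^3*s^3*b0^8*b1*x1^4 - 4*d1^4*d2^3*s^3*b0^8*b1*x0*x1^3 + d1^4*d2^4*s^4*b0^8*x1^2*x2^2 + 2*d1^4*d2^4*s^4*b0^8*x1^3*x2 + 2*d1^4*d2^4*s^4*b0^8*x0*x1^2*x2 + d1^4*d2^4*s^4*b0^8*x0*x1^3 - d1^4*d2^4*s^4*b0^8*x0^2*x2^2 - 2*d1^4*d2^4*s^4*b0^8*x0^2*x1*x2 - 2*d1^4*d2^4*s^4*b0^8*x0^3*x2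 - d1^4*d2^4*s^4*b0^8*x0^3*x1 - d1^5*d2*b0^8*x1*x2 - d1^5*d2*b0^8*x0*x1 - 4*d1^5*d2*s*b0^8*b1*x1^2*x2 - 4*d1^5*d2*s*b0^8*b1*x1^3 - 4*d1^5*d2*s*b0^8*b1*x0*x1^2 - 6*d1^5*d2^2*s^3*b0^8*b1*x1^3*x2 - 6*d1^5*d2^2*s^3*b0^8*b1*x1^4 - 6*d1^5*d2^2*s^3*b0^8*b1*x0*x1^3 + 2*d1^5*d2^3*s^4*b0^8*x1^2*x2^2 + 5*d1^5*d2^3*s^4*b0^8*x1^3*x2 + 4*d1^5*d2^3*s^4*b0^8*x0*x1^2*x2 + 3*d1^5*d2^3*s^4*b0^8*x0*x1^3 - d1^5*d2^3*s^4*b0^8*x0^2*x1*x2 - d1^5*d2^3*s^4*b0^8*x0^3*x1 - d1^6*s*b0^8*b1*x1^2*x2 - d1^6*s*b0^8*b1*x1^3 - d1^6*s*b0^8*b1*x0*x1^2 - 4*d1^6*d2*s^3*b0^8*b1*x1^3*x2 - 4*d1^6*d2*s^3*b0^8*b1*x1^4 - 4*d1^6*d2*s^3*b0^8*b1*x0*x1^3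 + d1^6*d2^2*s^4*b0^8*x1^2*x2^2 + 4*d1^6*d2^2*s^4*b0^8*x1^3*x2 + 2*d1^6*d2^2*s^4*b0^8*x0*x1^2*x2 + 3*d1^6*d2^2*s^4*b0^8*x0*x1^3 - d1^7*s^3*b0^8*b1*x1^3*x2 - d1^7*s^3*b0^8*b1*x1^4 - d1^7*s^3*b0^8*b1*x0*x1^3 + d1^7*d2*s^4*b0^8*x1^3*x2 + d1^7*d2*s^4*b0^8*x0*x1^3 - d*d1*d2^4*s*b0^6*b1^3*x0*x1*x2 - d*d1*d2^4*s*b0^6*b1^3*x0*x1^2 - d*d1*d2^4*s*b0^6*b1^3*x0^2*x1 + d*d1*d2^4*s*b0^7*b1^2*x0*x1*x2 + d*d1*d2^4*s*b0^7*b1^2*x0*x1^2 + d*d1*d2^4*s*b0^7*b1^2*x0^2*x1 - d*d1^2*d2^3*b0^8*x0*x2 - d*d1^2*d2^3*b0^8*x0*x1 - d*d1^2*d2^3*b0^8*x0^2 - 4*d*d1^2*d2^3*s*b0^6*b1^3*x0*x1*x2 - 4*d*d1^2*d2^3*s*b0^6*b1^3*x0*x1^2 - 4*d*d1^2*d2^3*s*b0^6*b1^3*x0^2*x1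 + 4*d*d1^2*d2^3*s*b0^7*b1^2*x0*x1*x2 + 4*d*d1^2*d2^3*s*b0^7*b1^2*x0*x1^2 + 4*d*d1^2*d2^3*s*b0^7*b1^2*x0^2*x1 + d*d1^2*d2^4*b0^6*x0 - d*d1^2*d2^4*s*b0^7*x0*x2 - d*d1^2*d2^4*s*b0^7*x0*x1 - d*d1^2*d2^4*s*b0^7*x0^2 - d*d1^2*d2^4*s^2*b0^6*b1^2*x0*x1^2 + d*d1^2*d2^4*s^3*b0^7*b1^2*x0*x1^2*x2 + d*d1^2*d2^4*s^3*b0^7*b1^2*x0*x1^3 + d*d1^2*d2^4*s^3*b0^7*b1^2*x0^2*x1^2 - 2*d*d1^3*d2^2*b0^8*x0*x2 - 3*d*d1^3*d2^2*b0^8*x0*x1 - 2*d*d1^3*d2^2*b0^8*x0^2 - 6*d*d1^3*d2^2*s*b0^6*b1^3*x0*x1*x2 - 6*d*d1^3*d2^2*s*b0^6*b1^3*x0*x1^2 - 6*d*d1^3*d2^2*s*b0^6*b1^3*x0^2*x1 + 6*d*d1^3*d2^2*s*b0^7*b1^2*x0*x1*x2 + 6*d*d1^3*d2^2*s*b0^7*b1^2*x0*x1^2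 + 6*d*d1^3*d2^2*s*b0^7*b1^2*x0^2*x1 + d*d1^3*d2^3*b0^6*x0 - 2*d*d1^3*d2^3*s*b0^7*x0*x2 - 2*d*d1^3*d2^3*s*b0^7*x0*x1 - 2*d*d1^3*d2^3*s*b0^7*x0^2 - 4*d*d1^3*d2^3*s^2*b0^6*b1^2*x0*x1^2 + 4*d*d1^3*d2^3*s^3*b0^7*b1^2*x0*x1^2*x2 + 4*d*d1^3*d2^3*s^3*b0^7*b1^2*x0*x1^3 + 4*d*d1^3*d2^3*s^3*b0^7*b1^2*x0^2*x1^2 - d*d1^4*d2*b0^8*x0*x2 - 3*d*d1^4*d2*b0^8*x0*x1 - d*d1^4*d2*b0^8*x0^2 - 4*d*d1^4*d2*s*b0^6*b1^3*x0*x1*x2 - 4*d*d1^4*d2*s*b0^6*b1^3*x0*x1^2 - 4*d*d1^4*d2*s*b0^6*b1^3*x0^2*x1 + 4*d*d1^4*d2*s*b0^7*b1^2*x0*x1*x2 + 4*d*d1^4*d2*s*b0^7*b1^2*x0*x1^2 + 4*d*d1^4*d2*s*b0^7*b1^2*x0^2*x1 + d*d1^4*d2^2*b0^6*x0 - d*d1^4*d2^2*s*b0^7*x0*x2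 - d*d1^4*d2^2*s*b0^7*x0*x1 - d*d1^4*d2^2*s*b0^7*x0^2 - 6*d*d1^4*d2^2*s^2*b0^6*b1^2*x0*x1^2 + 6*d*d1^4*d2^2*s^3*b0^7*b1^2*x0*x1^2*x2 + 6*d*d1^4*d2^2*s^3*b0^7*b1^2*x0*x1^3 + 6*d*d1^4*d2^2*s^3*b0^7*b1^2*x0^2*x1^2 + d*d1^4*d2^3*s^4*b0^8*x0*x1^2*x2 + d*d1^4*d2^3*s^4*b0^8*x0*x1^3 - 2*d*d1^4*d2^3*s^4*b0^8*x0^2*x2^2 - 4*d*d1^4*d2^3*s^4*b0^8*x0^2*x1*x2 - 5*d*d1^4*d2^3*s^4*b0^8*x0^3*x2 - 3*d*d1^4*d2^3*s^4*b0^8*x0^3*x1 - 2*d*d1^4*d2^3*s^4*b0^8*x0^4 + d*d1^4*d2^4*s^4*b0^6*x0*x2^2 + 2*d*d1^4*d2^4*s^4*b0^6*x0*x1*x2 + 2*d*d1^4*d2^4*s^4*b0^6*x0^2*x2 + d*d1^4*d2^4*s^4*b0^6*x0^2*x1 + d*d1^4*d2^4*s^4*b0^6*x0^3 + d*d1^4*d2^4*s^5*b0^7*x0*x1^2*x2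 + d*d1^4*d2^4*s^5*b0^7*x0*x1^3 + d*d1^4*d2^4*s^5*b0^7*x0^2*x1^2 - d*d1^4*d2^4*s^5*b0^7*x0^3*x2 - d*d1^4*d2^4*s^5*b0^7*x0^3*x1 - d*d1^4*d2^4*s^5*b0^7*x0^4 - d*d1^5*b0^8*x0*x1 - d*d1^5*s*b0^6*b1^3*x0*x1*x2 - d*d1^5*s*b0^6*b1^3*x0*x1^2 - d*d1^5*s*b0^6*b1^3*x0^2*x1 + d*d1^5*s*b0^7*b1^2*x0*x1*x2 + d*d1^5*s*b0^7*b1^2*x0*x1^2 + d*d1^5*s*b0^7*b1^2*x0^2*x1 - 4*d*d1^5*d2*s^2*b0^6*b1^2*x0*x1^2 + 4*d*d1^5*d2*s^3*b0^7*b1^2*x0*x1^2*x2 + 4*d*d1^5*d2*s^3*b0^7*b1^2*x0*x1^3 + 4*d*d1^5*d2*s^3*b0^7*b1^2*x0^2*x1^2 + 2*d*d1^5*d2^2*s^4*b0^8*x0*x1^2*x2 + 3*d*d1^5*d2^2*s^4*b0^8*x0*x1^3 - 2*d*d1^5*d2^2*s^4*b0^8*x0^2*x1*x2 - 3*d*d1^5*d2^2*s^4*b0^8*x0^3*x1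 + d*d1^5*d2^3*s^4*b0^6*x0*x1*x2 + d*d1^5*d2^3*s^4*b0^6*x0^2*x1 + 2*d*d1^5*d2^3*s^5*b0^7*x0*x1^2*x2 + 2*d*d1^5*d2^3*s^5*b0^7*x0*x1^3 + 2*d*d1^5*d2^3*s^5*b0^7*x0^2*x1^2 - d*d1^6*s^2*b0^6*b1^2*x0*x1^2 + d*d1^6*s^3*b0^7*b1^2*x0*x1^2*x2 + d*d1^6*s^3*b0^7*b1^2*x0*x1^3 + d*d1^6*s^3*b0^7*b1^2*x0^2*x1^2 + d*d1^6*d2*s^4*b0^8*x0*x1^2*x2 + 3*d*d1^6*d2*s^4*b0^8*x0*x1^3 + d*d1^6*d2^2*s^5*b0^7*x0*x1^2*x2 + d*d1^6*d2^2*s^5*b0^7*x0*x1^3 + d*d1^6*d2^2*s^5*b0^7*x0^2*x1^2 + d*d1^7*s^4*b0^8*x0*x1^3 + d^2*d2^4*s*b0^5*b1^4*x0^2*x2 + d^2*d2^4*s*b0^5*b1^4*x0^2*x1 + d^2*d2^4*s*b0^5*b1^4*x0^3 - 2*d^2*d1*d2^3*b0^4*b1^4*x0^2 + 4*d^2*d1*d2^3*s*b0^5*b1^4*x0^2*x2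 + 4*d^2*d1*d2^3*s*b0^5*b1^4*x0^2*x1 + 4*d^2*d1*d2^3*s*b0^5*b1^4*x0^3 + d^2*d1*d2^4*s^3*b0^6*b1^3*x0^2*x1*x2 + d^2*d1*d2^4*s^3*b0^6*b1^3*x0^2*x1^2 + d^2*d1*d2^4*s^3*b0^6*b1^3*x0^3*x1 - 3*d^2*d1^2*d2^2*b0^4*b1^4*x0^2 + 6*d^2*d1^2*d2^2*s*b0^5*b1^4*x0^2*x2 + 6*d^2*d1^2*d2^2*s*b0^5*b1^4*x0^2*x1 + 6*d^2*d1^2*d2^2*s*b0^5*b1^4*x0^3 + 4*d^2*d1^2*d2^3*s^3*b0^6*b1^3*x0^2*x1*x2 + 4*d^2*d1^2*d2^3*s^3*b0^6*b1^3*x0^2*x1^2 + 4*d^2*d1^2*d2^3*s^3*b0^6*b1^3*x0^3*x1 + d^2*d1^2*d2^4*s^4*b0^6*b1^2*x0^2*x1^2 - 2*d^2*d1^3*d2*b0^4*b1^4*x0^2 - d^2*d1^3*d2*b0^8*x0^2 + 4*d^2*d1^3*d2*s*b0^5*b1^4*x0^2*x2 + 4*d^2*d1^3*d2*s*b0^5*b1^4*x0^2*x1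 + 4*d^2*d1^3*d2*s*b0^5*b1^4*x0^3 + 6*d^2*d1^3*d2^2*s^3*b0^6*b1^3*x0^2*x1*x2 + 6*d^2*d1^3*d2^2*s^3*b0^6*b1^3*x0^2*x1^2 + 6*d^2*d1^3*d2^2*s^3*b0^6*b1^3*x0^3*x1 - d^2*d1^3*d2^3*s^2*b0^6*x0^2 + 4*d^2*d1^3*d2^3*s^4*b0^6*b1^2*x0^2*x1^2 + d^2*d1^4*s*b0^5*b1^4*x0^2*x2 + d^2*d1^4*s*b0^5*b1^4*x0^2*x1 + d^2*d1^4*s*b0^5*b1^4*x0^3 + 4*d^2*d1^4*d2*s^3*b0^6*b1^3*x0^2*x1*x2 + 4*d^2*d1^4*d2*s^3*b0^6*b1^3*x0^2*x1^2 + 4*d^2*d1^4*d2*s^3*b0^6*b1^3*x0^3*x1 + 6*d^2*d1^4*d2^2*s^4*b0^6*b1^2*x0^2*x1^2 - d^2*d1^4*d2^2*s^4*b0^8*x0^2*x2^2 - 2*d^2*d1^4*d2^2*s^4*b0^8*x0^2*x1*x2 - 4*d^2*d1^4*d2^2*s^4*b0^8*x0^3*x2 - 3*d^2*d1^4*d2^2*s^4*b0^8*x0^3*x1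 - 3*d^2*d1^4*d2^2*s^4*b0^8*x0^4 + d^2*d1^4*d2^3*s^4*b0^6*x0^2*x2 + d^2*d1^4*d2^3*s^4*b0^6*x0^2*x1 + 2*d^2*d1^4*d2^3*s^4*b0^6*x0^3 - 2*d^2*d1^4*d2^3*s^5*b0^7*x0^3*x2 - 2*d^2*d1^4*d2^3*s^5*b0^7*x0^3*x1 - 2*d^2*d1^4*d2^3*s^5*b0^7*x0^4 + d^2*d1^4*d2^4*s^5*b0^5*x0^2*x2 + d^2*d1^4*d2^4*s^5*b0^5*x0^2*x1 + d^2*d1^4*d2^4*s^5*b0^5*x0^3 - d^2*d1^4*d2^4*s^6*b0^6*x0^2*x2^2 - 2*d^2*d1^4*d2^4*s^6*b0^6*x0^2*x1*x2 - 2*d^2*d1^4*d2^4*s^6*b0^6*x0^3*x2 - d^2*d1^4*d2^4*s^6*b0^6*x0^3*x1 - d^2*d1^4*d2^4*s^6*b0^6*x0^4 + d^2*d1^5*s^3*b0^6*b1^3*x0^2*x1*x2 + d^2*d1^5*s^3*b0^6*b1^3*x0^2*x1^2 + d^2*d1^5*s^3*b0^6*b1^3*x0^3*x1 + 4*d^2*d1^5*d2*s^4*b0^6*b1^2*x0^2*x1^2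 - d^2*d1^5*d2*s^4*b0^8*x0^2*x1*x2 - 3*d^2*d1^5*d2*s^4*b0^8*x0^3*x1 + d^2*d1^5*d2^2*s^4*b0^6*x0^2*x1 - d^2*d1^5*d2^3*s^6*b0^6*x0^2*x1*x2 - d^2*d1^5*d2^3*s^6*b0^6*x0^3*x1 + d^2*d1^6*s^4*b0^6*b1^2*x0^2*x1^2 + d^3*d2^4*s^2*b0^4*b1^4*x0^3 - d^3*d2^4*s^3*b0^5*b1^4*x0^3*x2 - d^3*d2^4*s^3*b0^5*b1^4*x0^3*x1 - d^3*d2^4*s^3*b0^5*b1^4*x0^4 + 4*d^3*d1*d2^3*s^2*b0^4*b1^4*x0^3 - 4*d^3*d1*d2^3*s^3*b0^5*b1^4*x0^3*x2 - 4*d^3*d1*d2^3*s^3*b0^5*b1^4*x0^3*x1 - 4*d^3*d1*d2^3*s^3*b0^5*b1^4*x0^4 + 6*d^3*d1^2*d2^2*s^2*b0^4*b1^4*x0^3 - 6*d^3*d1^2*d2^2*s^3*b0^5*b1^4*x0^3*x2 - 6*d^3*d1^2*d2^2*s^3*b0^5*b1^4*x0^3*x1 - 6*d^3*d1^2*d2^2*s^3*b0^5*b1^4*x0^4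 + 4*d^3*d1^3*d2*s^2*b0^4*b1^4*x0^3 - 4*d^3*d1^3*d2*s^3*b0^5*b1^4*x0^3*x2 - 4*d^3*d1^3*d2*s^3*b0^5*b1^4*x0^3*x1 - 4*d^3*d1^3*d2*s^3*b0^5*b1^4*x0^4 + d^3*d1^4*s^2*b0^4*b1^4*x0^3 - d^3*d1^4*s^3*b0^5*b1^4*x0^3*x2 - d^3*d1^4*s^3*b0^5*b1^4*x0^3*x1 - d^3*d1^4*s^3*b0^5*b1^4*x0^4 - d^3*d1^4*d2*s^4*b0^8*x0^3*x2 - d^3*d1^4*d2*s^4*b0^8*x0^3*x1 - 2*d^3*d1^4*d2*s^4*b0^8*x0^4 + d^3*d1^4*d2^2*s^4*b0^6*x0^3 - d^3*d1^4*d2^2*s^5*b0^7*x0^3*x2 - d^3*d1^4*d2^2*s^5*b0^7*x0^3*x1 - d^3*d1^4*d2^2*s^5*b0^7*x0^4 - d^3*d1^4*d2^3*s^6*b0^6*x0^3*x2 - d^3*d1^4*d2^3*s^6*b0^6*x0^3*x1 - 2*d^3*d1^4*d2^3*s^6*b0^6*x0^4 + d^3*d1^4*d2^4*s^6*b0^4*x0^3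 - d^3*d1^4*d2^4*s^7*b0^5*x0^3*x2 - d^3*d1^4*d2^4*s^7*b0^5*x0^3*x1 - d^3*d1^4*d2^4*s^7*b0^5*x0^4 - d^3*d1^5*s^4*b0^8*x0^3*x1 - d^3*d1^5*d2^2*s^6*b0^6*x0^3*x1 - 2*d^4*d1*d2^3*s^4*b0^4*b1^4*x0^4 - 3*d^4*d1^2*d2^2*s^4*b0^4*b1^4*x0^4 - 2*d^4*d1^3*d2*s^4*b0^4*b1^4*x0^4 - d^4*d1^4*d2^2*s^6*b0^6*x0^4) * h2

set_option maxHeartbeats 1000000 in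
theorem stmt_4 (m : ℕ) (hm : 0 < m) (F : Type*) [Field F] [Fintype F]
    (hF : Fintype.card F = 2 ^ (3 * m)) (a δ c : F)
    (hδ : δ + δ ^ (2 ^ m) + δ ^ (2 ^ (2 * m)) ≠ 1)
    (hc : c ^ (2 ^ m) ≠ c) :
    {x : F |
      ((1 + c) * x) + ((1 + c) * x) ^ (2 ^ m) + ((1 + c) * x) ^ (2 ^ (2 * m)) = 0 ∧
      ((1 + c) * x) ^ (2 ^ (3 * m - 1)) +
        (1 + c) * (1 + (δ + δ ^ (2 ^ m) + δ ^ (2 ^ (2 * m)))) * x +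
        (a ^ (2 ^ (2 * m)) + a ^ (2 ^ m)) * (x + x ^ (2 ^ m) + x ^ (2 ^ (2 * m))) = 0
      }.ncard ≤ 4 := by
  classical
  -- characteristic 2
  have hdvd : ringChar F ∣ 2 ^ (3*m) := by
    rw [← hF]
    exact (CharP.cast_eq_zero_iff F (ringChar F) _).mp (FiniteField.cast_card_eq_zero F)
  have hp : (ringChar F).Prime := CharP.char_is_prime F (ringChar F)
  have hr2 : ringChar F = 2 :=
    (Nat.prime_dvd_prime_iff_eq hp Nat.prime_two).mp (hp.dvd_of_dvd_pow hdvd)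
  haveI hchar : CharP F 2 := hr2 ▸ ringChar.charP F
  haveI : Fact (Nat.Prime 2) := ⟨Nat.prime_two⟩
  have h2 : (2:F) = 0 := CharP.cast_eq_zero F 2
  -- abbreviations
  set d : F := 1 + c with hdd
  set s : F := 1 + (δ + δ ^ (2^m) + δ ^ (2^(2*m))) with hsd
  set b0 : F := a ^ (2^(2*m)) + a ^ (2^m) with hb0d
  set d1 : F := d ^ (2^m) with hd1d
  set d2 : F := d1 ^ (2^m) with hd2d
  set b1 : F := b0 ^ (2^m) with hb1d
  -- generic facts
  have hsplit : ∀ z : F, z ^ (2^(2*m)) = (z ^ (2^m)) ^ (2^m) := by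
    intro z; rw [← pow_mul, ← pow_add, two_mul]
  have hcard : ∀ z : F, z ^ (2^(3*m)) = z := by
    intro z; rw [← hF]; exact FiniteField.pow_card z
  have hcube : ∀ z : F, ((z ^ (2^m)) ^ (2^m)) ^ (2^m) = z := by
    intro z
    rw [← pow_mul, ← pow_mul, show 2^m*(2^m*2^m) = 2^(3*m) by
      rw [← pow_add, ← pow_add]; congr 1; omega]
    exact hcard z
  have hfa : ∀ z w : F, (z + w) ^ (2^m) = z ^ (2^m) + w ^ (2^m) :=
    fun z w => add_pow_char_pow z w 2 m
  have hinj : ∀ u v : F, u ^ (2^m) = v ^ (2^m) → u = v := by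
    intro u v h
    have hz : (u - v) ^ (2^m) = 0 := by rw [sub_pow_char_pow, h, sub_self]
    exact sub_eq_zero.mp ((pow_eq_zero_iff (by positivity)).mp hz)
  have hd : d ≠ 0 := by
    intro h
    apply hc
    have hc1 : c = 1 := by
      have h' : (1:F) + c = 0 := by rw [← hdd]; exact h
      linear_combination h' - h2
    rw [hc1, one_pow]
  have hd1 : d1 ≠ 0 := by rw [hd1d]; exact pow_ne_zero _ hd
  have hd2 : d2 ≠ 0 := by rw [hd2d]; exact pow_ne_zero _ hd1
  have hne : d1 ≠ d2 := by
    intro h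
    have hdd1 : d = d1 := by
      apply hinj
      rw [← hd1d, ← hd2d]
      exact h
    apply hc
    have h3 : (1:F) + c = 1 + c ^ (2^m) := by
      calc (1:F) + c = d := hdd.symm
        _ = d1 := hdd1
        _ = d ^ (2^m) := hd1d
        _ = (1+c) ^ (2^m) := by rw [hdd]
        _ = 1 + c ^ (2^m) := by rw [hfa, one_pow]
    exact (add_left_cancel h3).symm
  have hd12 : d1 + d2 ≠ 0 := fun h => hne (by linear_combination h - d2*h2)
  have hs1 : s ^ (2^m) = s := by
    rw [hsd, hsplit δ, hfa, hfa, hfa, one_pow, hcube δ]; ring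
  -- the three relations satisfied by each solution
  have hRel : ∀ x : F,
      (d*x) + (d*x) ^ (2^m) + (d*x) ^ (2^(2*m)) = 0 →
      (d*x) ^ (2^(3*m-1)) + d*s*x + b0*(x + x ^ (2^m) + x ^ (2^(2*m))) = 0 →
      (d*x = (d*s*x + b0*(x + x^(2^m) + (x^(2^m))^(2^m)))^2 ∧
       d1*(x^(2^m)) = (d1*s*(x^(2^m)) + b1*(x + x^(2^m) + (x^(2^m))^(2^m)))^2 ∧
       d*x + d1*(x^(2^m)) + d2*((x^(2^m))^(2^m)) = 0) := by
    intro x H1 H2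
    have hL : d*x + d1*(x^(2^m)) + d2*((x^(2^m))^(2^m)) = 0 := by
      rw [hsplit (d*x), mul_pow, mul_pow] at H1
      rw [← hd1d] at H1
      rw [← hd2d] at H1
      exact H1
    have hP : (d*x)^(2^(3*m-1)) = -(d*s*x + b0*(x + x^(2^m) + (x^(2^m))^(2^m))) := by
      rw [hsplit x] at H2
      linear_combination H2
    have hPP : ((d*x)^(2^(3*m-1)))^2 = d*x := by
      rw [← pow_mul, show 2^(3*m-1)*2 = 2^(3*m) from by rw [← pow_succ]; congr 1; omega]
      exact hcard (d*x)
    have hQ0 : d*x = (d*s*x + b0*(x + x^(2^m) + (x^(2^m))^(2^m)))^2 := by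
      rw [← hPP, hP]; ring
    have hA : (d*s*x)^(2^m) = d1*s*(x^(2^m)) := by
      rw [mul_pow, mul_pow, hs1, ← hd1d]
    have hB : (b0*(x + x^(2^m) + (x^(2^m))^(2^m)))^(2^m)
        = b1*(x^(2^m) + (x^(2^m))^(2^m) + x) := by
      rw [mul_pow, hfa (x + x^(2^m)) ((x^(2^m))^(2^m)), hfa x (x^(2^m)), hcube x, ← hb1d]
    have hQ1 : d1*(x^(2^m)) = (d1*s*(x^(2^m)) + b1*(x + x^(2^m) + (x^(2^m))^(2^m)))^2 := by
      have h := congrArg (fun z : F => z ^ (2^m)) hQ0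
      rw [pow_right_comm (d*s*x + b0*(x + x^(2^m) + (x^(2^m))^(2^m))) 2 (2^m),
        hfa (d*s*x) (b0*(x + x^(2^m) + (x^(2^m))^(2^m))), hA, hB, mul_pow d x, ← hd1d] at h
      linear_combination h
    exact ⟨hQ0, hQ1, hL⟩
  by_cases hb : b0 = 0
  · apply aux_count_4 F 0 (d^2*s^2) d hd
    intro x hx
    simp only [Set.mem_setOf_eq] at hx
    obtain ⟨H1, H2⟩ := hx
    obtain ⟨hQ0, -, -⟩ := hRel x H1 H2
    rw [hb] at hQ0
    linear_combination (-1 : F)*hQ0 + (d*x)*h2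
  · apply aux_count_4 F
      (d1^4*d2^4*s^4*b0^8 + d^4*d2^4*s^4*b0^4*b1^4 + d^4*d1^4*s^4*b0^4*b1^4 + d^4*d1^4*s^4*b0^8 + d^4*d1^4*d2^4*s^8*b0^4)
      (d1^2*d2^4*b0^8 + d1^4*d2^2*b0^8 + d^2*d2^4*b0^4*b1^4 + d^2*d1^2*d2^2*b0^8 + d^2*d1^2*d2^4*s^2*b0^6 + d^2*d1^4*b0^4*b1^4 + d^2*d1^4*b0^8 + d^2*d1^4*d2^2*s^2*b0^6 + d^2*d1^4*d2^4*s^4*b0^4)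
      (d*d1^2*d2^4*b0^6 + d*d1^4*d2^2*b0^6)
    · have hE1 : (d*d1^2*d2^4*b0^6 + d*d1^4*d2^2*b0^6) = d*d1^2*d2^2*b0^6*(d1+d2)^2 := by
        linear_combination (-(d*d1^3*d2^3*b0^6))*h2
      rw [hE1]
      exact mul_ne_zero (mul_ne_zero (mul_ne_zero (mul_ne_zero hd (pow_ne_zero _ hd1))
        (pow_ne_zero _ hd2)) (pow_ne_zero _ hb)) (pow_ne_zero _ hd12)
    · intro x hx
      simp only [Set.mem_setOf_eq] at hx
      obtain ⟨H1, H2⟩ := hx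
      obtain ⟨hQ0, hQ1, hL⟩ := hRel x H1 H2
      exact aux_key_4 F h2 d d1 d2 s b0 b1 x (x^(2^m)) ((x^(2^m))^(2^m)) hQ0 hQ1 hL
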